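/- Let G̃ denote the group (under composition) of self-homeomorphisms α : ℝ → ℝ that are strictly increasing and satisfy α(x+1) = α(x) + 1 for all x ∈ ℝ. If ζ ∈ G̃ commutes with every element of G̃, then there exists an integer k such that ζ(x) = x + k for all x ∈ ℝ. Conversely, every integer translation x ↦ x + k commutes with every element of G̃; hence the center of G̃ is exactly the group of integer translations, which is isomorphic to ℤ. -/

import Mathlib

open Real Filter

/-- An element of `Homeo~₊(S¹)`: a self-homeomorphism of `ℝ` which is
strictly increasing and commutes with translation by `1`. -/
def IsLift (α : ℝ ≃ₜ ℝ) : Prop :=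
  StrictMono ⇑α ∧ ∀ x : ℝ, α (x + 1) = α x + 1

noncomputable def bump : ℝ → ℝ := fun x => x + (1 - Real.cos (2 * π * x)) / (8 * π)

lemma bump_hasDerivAt (x : ℝ) :
    HasDerivAt bump (1 + (0 - -Real.sin (2 * π * x) * (2 * π)) / (8 * π)) x := by
  have h1 : HasDerivAt (fun x : ℝ => 2 * π * x) (2 * π) x := by
    simpa using (hasDerivAt_id x).const_mul (2 * π)
  exact (hasDerivAt_id x).add (((hasDerivAt_const x 1).sub h1.cos).div_const (8 * π))

lemma bump_strictMono : StrictMono bump := by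
  apply strictMono_of_deriv_pos
  intro x
  rw [(bump_hasDerivAt x).deriv]
  have hπ := Real.pi_pos
  have hs : -1 ≤ Real.sin (2 * π * x) := Real.neg_one_le_sin _
  have h : (0 - -Real.sin (2 * π * x) * (2 * π)) / (8 * π) = Real.sin (2 * π * x) / 4 := by
    field_simp; ring
  rw [h]
  nlinarith

lemma bump_le (x : ℝ) : x ≤ bump x ∧ bump x ≤ x + 1 := by
  have hπ := Real.pi_pos
  have h1 : Real.cos (2 * π * x) ≤ 1 := Real.cos_le_one _
  have h2 : -1 ≤ Real.cos (2 * π * x) := Real.neg_one_le_cos _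
  have h3 : (0:ℝ) < 8 * π := by linarith
  constructor
  · have : 0 ≤ (1 - Real.cos (2 * π * x)) / (8 * π) :=
      div_nonneg (by linarith) h3.le
    unfold bump; linarith
  · have : (1 - Real.cos (2 * π * x)) / (8 * π) ≤ 1 := by
      rw [div_le_one h3]
      have := Real.pi_gt_three
      linarith
    unfold bump; linarith

lemma bump_surjective : Function.Surjective bump := by
  have hc : Continuous bump := by unfold bump; fun_prop
  refine hc.surjective ?_ ?_
  · exact tendsto_atTop_mono (fun x => (bump_le x).1) tendsto_id
  · exact tendsto_atBot_mono (fun x => (bump_le x).2)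
      (tendsto_atBot_add_const_right _ 1 tendsto_id)

/-- `bump` as a homeomorphism of `ℝ`. -/
noncomputable def bumpHomeo : ℝ ≃ₜ ℝ :=
  (StrictMono.orderIsoOfSurjective bump bump_strictMono bump_surjective).toHomeomorph

lemma bumpHomeo_apply (x : ℝ) : bumpHomeo x = bump x := rfl

lemma bumpHomeo_isLift : IsLift bumpHomeo := by
  refine ⟨bump_strictMono, fun x => ?_⟩
  show bump (x + 1) = bump x + 1
  unfold bump
  have : 2 * π * (x + 1) = 2 * π * x + 2 * π := by ring
  rw [this, Real.cos_add_two_pi]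
  ring

/-- Translation by `u` as a homeomorphism is a lift. -/
lemma translation_isLift (u : ℝ) : IsLift (Homeomorph.addRight u) := by
  refine ⟨fun a b h => by simpa using h, fun x => ?_⟩
  show x + 1 + u = x + u + 1
  ring

lemma lift_int (α : ℝ ≃ₜ ℝ) (hα : IsLift α) (k : ℤ) (x : ℝ) : α (x + k) = α x + k := by
  induction k using Int.induction_on with
  | zero => simp
  | succ n ih =>
      have : (x : ℝ) + ((n : ℤ) + 1 : ℤ) = (x + (n : ℤ)) + 1 := by push_cast; ring
      rw [this, hα.2, ih]; push_cast; ring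
  | pred n ih =>
      have h1 : (x : ℝ) + (-(n : ℤ) - 1 : ℤ) + 1 = x + (-(n : ℤ) : ℤ) := by push_cast; ring
      have := hα.2 (x + (-(n : ℤ) - 1 : ℤ))
      rw [h1, ih] at this
      push_cast at this ⊢
      linarith

/-- The center of `Homeo~₊(S¹)` is exactly the group of integer
translations: any element commuting with every element of the group is an
integer translation, and conversely every integer translation is in the
center. -/
theorem center_of_lifted_homeo :
    (∀ ζ : ℝ ≃ₜ ℝ, IsLift ζ →
      (∀ α : ℝ ≃ₜ ℝ, IsLift α → ∀ x : ℝ, ζ (α x) = α (ζ x)) →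
      ∃ k : ℤ, ∀ x : ℝ, ζ x = x + k) ∧
    (∀ k : ℤ, ∀ α : ℝ ≃ₜ ℝ, IsLift α → ∀ x : ℝ, α (x + k) = α x + k) := by
  constructor
  · intro ζ hζ hcomm
    -- ζ commutes with every translation, so ζ x = x + ζ 0
    have htrans : ∀ x : ℝ, ζ x = x + ζ 0 := by
      intro x
      have := hcomm (Homeomorph.addRight x) (translation_isLift x) 0
      simpa [Homeomorph.addRight, add_comm] using this
    -- commuting with bumpHomeo at 0 forces ζ 0 ∈ ℤ
    have hb := hcomm bumpHomeo bumpHomeo_isLift 0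
    rw [bumpHomeo_apply, bumpHomeo_apply, htrans (bump 0), htrans 0] at hb
    have h0 : bump 0 = 0 := by unfold bump; simp
    rw [h0] at hb
    -- hb : 0 + ζ 0 = bump (0 + ζ 0)
    have hcos : Real.cos (2 * π * (ζ 0)) = 1 := by
      have hπ := Real.pi_pos
      have hbb : (0:ℝ) + (0 + ζ 0) = (0 + ζ 0) + (1 - Real.cos (2 * π * (0 + ζ 0))) / (8 * π) := hb
      simp only [zero_add] at hbb
      have h8 : (8 * π : ℝ) ≠ 0 := by positivity
      have hz : (1 - Real.cos (2 * π * (ζ 0))) / (8 * π) = 0 := by linarith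
      rw [div_eq_zero_iff] at hz
      rcases hz with h | h
      · linarith
      · exact absurd h h8
    rw [Real.cos_eq_one_iff] at hcos
    obtain ⟨n, hn⟩ := hcos
    refine ⟨n, fun x => ?_⟩
    rw [htrans x]
    have hπ := Real.pi_pos
    have : ζ 0 = n := by
      have h2 : (n : ℝ) * (2 * π) = 2 * π * ζ 0 := hn
      have : (2 * π) * (n : ℝ) = (2 * π) * ζ 0 := by linarith
      exact (mul_left_cancel₀ (by positivity) this).symm
    rw [this]
  · intro k α hα x
    exact lift_int α hα k x
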